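/- There exists exactly one noncommutative power series S ∈ ℝ⟨⟨A⟩⟩ with zero constant term satisfying the algebraic equation S = b − a·exp⧢(2S)·c, where the products with the letters a and c are concatenation products. -/

import Mathlib

/-! STATEMENT 0: Existence and uniqueness of the noncommutative power series
`S = b − a·exp⧢(2S)·c` with zero constant term. -/

/-- The three-letter alphabet `A = {a, b, c}`. -/
inductive Letter : Type
  | a | b | c
deriving DecidableEq

/-- Words on the alphabet. -/
abbrev Word := List Letter

/-- Noncommutative power series over `ℝ` on the alphabet: a real coefficient
for every word. -/
abbrev Series := Word → ℝ

/-- The series associated to a single word (coefficient `1` on that word, `0` elsewhere). -/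
def ofWord (v : Word) : Series := fun w => if w = v then 1 else 0

/-- Concatenation product of series: `⟨PQ, w⟩ = Σ_{uv = w} ⟨P,u⟩⟨Q,v⟩`. -/
noncomputable def cmul (P Q : Series) : Series :=
  fun w => ∑ i ∈ Finset.range (w.length + 1), P (w.take i) * Q (w.drop i)

/-- The subword of `w` selected by a boolean mask. -/
def select (w : Word) (m : List Bool) : Word :=
  ((w.zip m).filter (fun p => p.2)).map Prod.fst

/-- The (bilinear) shuffle product of two series: the coefficient on `w` is the sum,
over all splittings of the positions of `w` into two complementary subsets, of the
product of the coefficients of the two selected subwords.  This is the bilinear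
product determined on words by `ε⧢w = w⧢ε = w` and
`(w₁a₁)⧢(w₂a₂) = (w₁⧢(w₂a₂))a₁ + ((w₁a₁)⧢w₂)a₂`. -/
noncomputable def shuffle (P Q : Series) : Series := fun w =>
  ∑ m : Fin w.length → Bool,
    P (select w (List.ofFn m)) * Q (select w (List.ofFn (fun i => ! m i)))

/-- Shuffle powers `P^{⧢k}`. -/
noncomputable def shufPow (P : Series) : ℕ → Series
  | 0 => ofWord []
  | k + 1 => shuffle (shufPow P k) P

/-- The shuffle exponential `exp⧢(P) = ε + Σ_{k≥1} P^{⧢k}/k!` (for `P` with zero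
constant term only finitely many terms contribute to each coefficient). -/
noncomputable def shufExp (P : Series) : Series :=
  fun w => ∑' k : ℕ, ((k.factorial : ℝ))⁻¹ * shufPow P k w

/-! Auxiliary lemmas -/

lemma select_length_le (w : Word) (m : List Bool) : (select w m).length ≤ w.length := by
  unfold select
  calc (((w.zip m).filter (fun p => p.2)).map Prod.fst).length
      = ((w.zip m).filter (fun p => p.2)).length := List.length_map _
    _ ≤ (w.zip m).length := List.length_filter_le _ _
    _ ≤ w.length := by rw [List.length_zip]; exact min_le_left _ _

lemma shuffle_congr {P P' Q Q' : Series} {w : Word}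
    (hP : ∀ v : Word, v.length ≤ w.length → P v = P' v)
    (hQ : ∀ v : Word, v.length ≤ w.length → Q v = Q' v) :
    shuffle P Q w = shuffle P' Q' w := by
  unfold shuffle
  refine Finset.sum_congr rfl fun m _ => ?_
  rw [hP _ (select_length_le _ _), hQ _ (select_length_le _ _)]

lemma shufPow_congr {P P' : Series} {n : ℕ}
    (h : ∀ v : Word, v.length ≤ n → P v = P' v) :
    ∀ k, ∀ w : Word, w.length ≤ n → shufPow P k w = shufPow P' k w := by
  intro k
  induction k with
  | zero => intro w _; rfl
  | succ k ih =>
    intro w hw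
    exact shuffle_congr (fun v hv => ih v (hv.trans hw)) (fun v hv => h v (hv.trans hw))

lemma shufExp_congr {P P' : Series} {w : Word}
    (h : ∀ v : Word, v.length ≤ w.length → P v = P' v) :
    shufExp P w = shufExp P' w :=
  tsum_congr fun k => by rw [shufPow_congr h k w le_rfl]

lemma cmul_nil_left (x : Letter) (X : Series) : cmul (ofWord [x]) X [] = 0 := by
  simp [cmul, ofWord]

lemma cmul_cons_left (x : Letter) (X : Series) (y : Letter) (t : Word) :
    cmul (ofWord [x]) X (y :: t) = if y = x then X t else 0 := by
  unfold cmul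
  rw [Finset.sum_eq_single 1]
  · by_cases h : y = x <;> simp [ofWord, h]
  · intro i hi hne
    match i with
    | 0 => simp [ofWord]
    | (j+2) =>
      have hi' : j + 2 < t.length + 1 + 1 := by simpa using Finset.mem_range.mp hi
      have hlen : ((y :: t).take (j+2)).length ≠ 1 := by
        rw [List.length_take]; simp; omega
      have hne' : (y :: t).take (j+2) ≠ [x] := by
        intro h; rw [h] at hlen; simp at hlen
      show (if (y :: t).take (j+2) = [x] then (1:ℝ) else 0) * _ = 0
      rw [if_neg hne', zero_mul]
  · intro h; exact absurd (Finset.mem_range.mpr (by simp)) h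

lemma cmul_congr_left {X Y Q : Series} {w : Word}
    (h : ∀ v : Word, v.length ≤ w.length → X v = Y v) :
    cmul X Q w = cmul Y Q w := by
  unfold cmul
  refine Finset.sum_congr rfl fun i _ => ?_
  rw [h _ (by rw [List.length_take]; exact min_le_right _ _)]

/-- The recursion operator. -/
noncomputable def Phi (S : Series) : Series :=
  ofWord [Letter.b] -
    cmul (ofWord [Letter.a]) (cmul (shufExp ((2 : ℝ) • S)) (ofWord [Letter.c]))

lemma Phi_local {S T : Series} {n : ℕ}
    (h : ∀ v : Word, v.length < n → S v = T v) :
    ∀ w : Word, w.length ≤ n → Phi S w = Phi T w := by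
  intro w hw
  unfold Phi
  simp only [Pi.sub_apply]
  congr 1
  cases w with
  | nil => rw [cmul_nil_left, cmul_nil_left]
  | cons y t =>
    rw [cmul_cons_left, cmul_cons_left]
    by_cases hy : y = Letter.a
    · rw [if_pos hy, if_pos hy]
      have ht : t.length < n := by simp only [List.length_cons] at hw; omega
      refine cmul_congr_left fun v hv => shufExp_congr fun u hu => ?_
      have : S u = T u := h u (by omega)
      simp [this]
    · rw [if_neg hy, if_neg hy]

/-- Iterates of `Phi` starting from `0`. -/
noncomputable def seq : ℕ → Series
  | 0 => fun _ => 0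
  | n + 1 => Phi (seq n)

lemma seq_agree : ∀ n, ∀ w : Word, w.length < n → seq (n + 1) w = seq n w := by
  intro n
  induction n with
  | zero => intro w hw; omega
  | succ n ih =>
    intro w hw
    exact Phi_local (fun v hv => ih v hv) w (by omega)

lemma seq_agree' : ∀ m n, m ≤ n → ∀ w : Word, w.length < m → seq n w = seq m w := by
  intro m n hmn
  induction n with
  | zero => intro w hw; omega
  | succ n ih =>
    intro w hw
    rcases Nat.lt_or_ge m (n + 1) with h | h
    · rw [seq_agree n w (by omega), ih (by omega) w hw]
    · have : m = n + 1 := by omega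
      rw [this]

/-- The fixed point candidate. -/
noncomputable def Scand : Series := fun w => seq (w.length + 1) w

lemma Scand_eq_seq {n : ℕ} {w : Word} (h : w.length < n) : Scand w = seq n w := by
  unfold Scand
  rw [seq_agree' (w.length + 1) n (by omega) w (by omega)]

lemma Scand_fixed : Scand = Phi Scand := by
  funext w
  show seq (w.length + 1) w = Phi Scand w
  show Phi (seq w.length) w = Phi Scand w
  exact Phi_local (fun v hv => (Scand_eq_seq hv).symm) w le_rfl

lemma Phi_nil (S : Series) : Phi S [] = 0 := by
  simp [Phi, ofWord, cmul_nil_left]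

lemma Phi_fixed_unique {S T : Series} (hS : S = Phi S) (hT : T = Phi T) : S = T := by
  have key : ∀ n, ∀ w : Word, w.length < n → S w = T w := by
    intro n
    induction n with
    | zero => intro w hw; omega
    | succ n ih =>
      intro w hw
      rw [hS, hT]
      exact Phi_local ih w (by omega)
  funext w
  exact key (w.length + 1) w (by omega)



/-- There exists exactly one series `S` with zero constant term such that
`S = b − a·exp⧢(2S)·c`. -/
theorem existsUnique_series_eq_b_sub_a_shufExp_c :
    ∃! S : Series, S [] = 0 ∧
      S = ofWord [Letter.b] -
          cmul (ofWord [Letter.a]) (cmul (shufExp ((2 : ℝ) • S)) (ofWord [Letter.c])) := by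
  refine ⟨Scand, ⟨?_, ?_⟩, ?_⟩
  · rw [show Scand [] = Phi Scand [] from congrFun Scand_fixed []]
    exact Phi_nil _
  · exact Scand_fixed
  · rintro T ⟨-, hT⟩
    exact Phi_fixed_unique hT Scand_fixed
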